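/- arXiv:1706.08952 — 2 statements merged into one kernel-verified Lean document; each statement's English description precedes it below -/
import Mathlib

section
/- (Sonine's first finite integral) For complex numbers μ, ν with Re(μ) > -1 and Re(ν) > -1, and for every t > 0, one has J_{μ+ν+1}(t) = (t^{ν+1} / (2^ν Γ(ν+1))) · ∫_0^1 J_μ(st) s^{μ+1} (1-s²)^ν ds. -/
open Complex Real

/-- Bessel function of the first kind of order `ν`, defined by its power series. -/
noncomputable def besselJ (ν : ℂ) (t : ℝ) : ℂ :=
  ∑' n : ℕ, ((-1) ^ n / ((n.factorial : ℂ) * Complex.Gamma ((n : ℂ) + ν + 1))) *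
    (((t : ℂ) / 2) ^ ((2 * (n : ℂ)) + ν))

section SonineAux
open MeasureTheory Set Filter

lemma sq_image_Ioo : (fun x : ℝ => x ^ 2) '' Set.Ioo 0 1 = Set.Ioo 0 1 := by
  ext u
  constructor
  · rintro ⟨x, ⟨hx0, hx1⟩, rfl⟩
    exact ⟨pow_pos hx0 2, pow_lt_one₀ hx0.le hx1 two_ne_zero⟩
  · rintro ⟨hu0, hu1⟩
    refine ⟨Real.sqrt u, ⟨Real.sqrt_pos.mpr hu0, ?_⟩, Real.sq_sqrt hu0.le⟩
    rw [show (1:ℝ) = Real.sqrt 1 from Real.sqrt_one.symm]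
    exact Real.sqrt_lt_sqrt hu0.le hu1

lemma sq_injOn : Set.InjOn (fun x : ℝ => x ^ 2) (Set.Ioo 0 1) := by
  intro x hx y hy h
  simp only at h
  nlinarith [hx.1, hy.1]

lemma sq_hasDeriv : ∀ x ∈ Set.Ioo (0:ℝ) 1,
    HasDerivWithinAt (fun y : ℝ => y ^ 2) (2 * x) (Set.Ioo (0:ℝ) 1) x :=
  fun x _ => by simpa using (hasDerivAt_pow 2 x).hasDerivWithinAt

lemma subst_sq (g : ℝ → ℂ) :
    ∫ u in Set.Ioo (0:ℝ) 1, g u = ∫ x in Set.Ioo (0:ℝ) 1, (2 * x) • g (x ^ 2) := by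
  nth_rewrite 1 [← sq_image_Ioo]
  rw [integral_image_eq_integral_abs_deriv_smul measurableSet_Ioo sq_hasDeriv sq_injOn]
  refine setIntegral_congr_fun measurableSet_Ioo fun x hx => ?_
  rw [abs_of_pos (by have := hx.1; positivity : (0:ℝ) < 2 * x)]

lemma integrableOn_subst_sq (g : ℝ → ℂ) :
    IntegrableOn g (Set.Ioo (0:ℝ) 1) ↔
      IntegrableOn (fun x => |2 * x| • g (x ^ 2)) (Set.Ioo (0:ℝ) 1) := by
  nth_rewrite 1 [← sq_image_Ioo]
  exact integrableOn_image_iff_integrableOn_abs_deriv_smul measurableSet_Ioo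
    sq_hasDeriv sq_injOn g

noncomputable def gg (a b : ℂ) (s : ℝ) : ℂ :=
  (s : ℂ) ^ (2 * a - 1) * (((1 - s ^ 2 : ℝ) : ℂ)) ^ (b - 1)

lemma cpow_sq (x : ℝ) (hx : 0 < x) (c : ℂ) :
    (((x ^ 2 : ℝ)) : ℂ) ^ c = (x : ℂ) ^ (2 * c) := by
  rw [show (x ^ 2 : ℝ) = x * x by ring]
  push_cast
  rw [mul_cpow_ofReal_nonneg hx.le hx.le,
    ← cpow_add _ _ (by exact_mod_cast hx.ne'), show c + c = 2 * c by ring]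

lemma smul_gg_eq (a b : ℂ) {x : ℝ} (hx : x ∈ Set.Ioo (0:ℝ) 1) :
    (2 * x) • ((((x^2:ℝ)) : ℂ) ^ (a - 1) * (((1 - x ^ 2 : ℝ)) : ℂ) ^ (b - 1))
      = 2 * gg a b x := by
  obtain ⟨hx0, hx1⟩ := hx
  rw [real_smul, cpow_sq x hx0, gg]
  push_cast
  rw [show (2:ℂ) * a - 1 = 2 * (a - 1) + 1 by ring, cpow_add _ _ (by exact_mod_cast hx0.ne'),
    cpow_one]
  ring

lemma one_sub_cast (x : ℝ) : (1 : ℂ) - ((x ^ 2 : ℝ) : ℂ) = (((1 - x ^ 2 : ℝ)) : ℂ) := by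
  push_cast; ring

lemma gg_integrableOn {a b : ℂ} (ha : 0 < a.re) (hb : 0 < b.re) :
    IntegrableOn (gg a b) (Set.Ioo (0:ℝ) 1) := by
  have hbeta : IntegrableOn
      (fun u : ℝ => (u : ℂ) ^ (a - 1) * ((1 : ℂ) - u) ^ (b - 1)) (Set.Ioo 0 1) :=
    (((intervalIntegrable_iff_integrableOn_Ioc_of_le zero_le_one).mp
      (Complex.betaIntegral_convergent ha hb))).mono_set Set.Ioo_subset_Ioc_self
  have h2 := (integrableOn_subst_sq
    (fun u : ℝ => (u : ℂ) ^ (a - 1) * ((1 : ℂ) - u) ^ (b - 1))).mp hbeta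
  have h3 : IntegrableOn (fun x : ℝ => 2 * gg a b x) (Set.Ioo (0:ℝ) 1) := by
    refine h2.congr_fun (fun x hx => ?_) measurableSet_Ioo
    beta_reduce
    rw [abs_of_pos (by have := hx.1; positivity : (0:ℝ) < 2 * x), one_sub_cast]
    exact smul_gg_eq a b hx
  have h4 := h3.const_mul (2⁻¹ : ℂ)
  simp at h4
  exact h4

lemma gg_integral (a b : ℂ) :
    ∫ x in Set.Ioo (0:ℝ) 1, gg a b x = (1 / 2) * Complex.betaIntegral a b := by
  have h2 : ∫ u in Set.Ioo (0:ℝ) 1, (u : ℂ) ^ (a - 1) * ((1 : ℂ) - u) ^ (b - 1)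
      = Complex.betaIntegral a b := by
    rw [Complex.betaIntegral, intervalIntegral.integral_of_le zero_le_one,
      MeasureTheory.integral_Ioc_eq_integral_Ioo]
  have key : Complex.betaIntegral a b = 2 * ∫ x in Set.Ioo (0:ℝ) 1, gg a b x := by
    rw [← h2, subst_sq (fun u : ℝ => (u : ℂ) ^ (a - 1) * ((1 : ℂ) - u) ^ (b - 1)),
      ← MeasureTheory.integral_const_mul]
    refine setIntegral_congr_fun measurableSet_Ioo fun x hx => ?_
    rw [one_sub_cast]
    exact smul_gg_eq a b hx
  rw [key]; ring

lemma gamma_arg_ne (c : ℂ) (hc : -1 < c.re) (n : ℕ) : ((n : ℂ) + c + 1) ≠ 0 := by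
  intro h
  have : ((n : ℂ) + c + 1).re = 0 := by rw [h]; simp
  simp only [add_re, one_re, natCast_re] at this
  have : (0:ℝ) ≤ (n:ℝ) := n.cast_nonneg
  linarith

lemma gamma_abs_pos (c : ℂ) (hc : -1 < c.re) (n : ℕ) :
    0 < ‖Complex.Gamma ((n : ℂ) + c + 1)‖ := by
  rw [norm_pos_iff]
  apply Complex.Gamma_ne_zero_of_re_pos
  simp only [add_re, one_re, natCast_re]
  have : (0:ℝ) ≤ (n:ℝ) := n.cast_nonneg
  linarith

lemma summable_aux (c : ℂ) (hc : -1 < c.re) (r : ℝ) (hr : 0 ≤ r) :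
    Summable (fun n : ℕ =>
      r ^ n / ((n.factorial : ℝ) * ‖Complex.Gamma ((n : ℂ) + c + 1)‖)) := by
  set f : ℕ → ℝ := fun n =>
    r ^ n / ((n.factorial : ℝ) * ‖Complex.Gamma ((n : ℂ) + c + 1)‖) with hf
  have hfpos : ∀ n, 0 ≤ f n := fun n => by
    have := gamma_abs_pos c hc n
    have : (0:ℝ) < n.factorial := by exact_mod_cast n.factorial_pos
    positivity
  refine summable_of_ratio_norm_eventually_le (r := 1/2) (by norm_num) ?_
  filter_upwards [eventually_ge_atTop (max 1 ⌈2 * r⌉₊)] with n hn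
  have hn1 : 1 ≤ n := le_trans (le_max_left _ _) hn
  have hn2 : 2 * r ≤ (n : ℝ) :=
    le_trans (Nat.le_ceil _) (by exact_mod_cast le_trans (le_max_right _ _) hn)
  set z : ℂ := (n : ℂ) + c + 1 with hz
  have hzabs : (n : ℝ) ≤ ‖z‖ := by
    refine le_trans ?_ (Complex.re_le_norm z)
    simp only [hz, add_re, one_re, natCast_re]
    linarith
  have hzne : z ≠ 0 := gamma_arg_ne c hc n
  have hGpos := gamma_abs_pos c hc n
  have hG1 : ‖Complex.Gamma (((n:ℕ)+1 : ℕ) + c + 1)‖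
      = ‖z‖ * ‖Complex.Gamma z‖ := by
    have : (((n:ℕ)+1 : ℕ) : ℂ) + c + 1 = z + 1 := by push_cast; ring
    rw [this, Complex.Gamma_add_one z hzne, norm_mul]
  have hstep : f (n + 1) = f n * (r / ((n + 1) * ‖z‖)) := by
    simp only [hf]
    rw [hG1, Nat.factorial_succ]
    have h1 : ((n:ℝ)) + 1 ≠ 0 := by positivity
    have h2 : ‖z‖ ≠ 0 := by
      have : (0:ℝ) < ‖z‖ :=
        lt_of_lt_of_le (lt_of_lt_of_le zero_lt_one (by exact_mod_cast hn1)) hzabs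
      exact this.ne'
    have h3 : (n.factorial : ℝ) ≠ 0 := by exact_mod_cast n.factorial_pos.ne'
    have h4 : ‖Complex.Gamma z‖ ≠ 0 := hGpos.ne'
    push_cast
    field_simp
    ring
  have hzpos : (0:ℝ) < ‖z‖ :=
    lt_of_lt_of_le (lt_of_lt_of_le zero_lt_one (by exact_mod_cast hn1)) hzabs
  have hq : r / ((n + 1) * ‖z‖) ≤ 1 / 2 := by
    rw [div_le_div_iff₀ (by positivity) (by norm_num)]
    have hn1' : (1:ℝ) ≤ n := by exact_mod_cast hn1
    nlinarith [hzabs, hn2, hr, hn1']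
  rw [Real.norm_of_nonneg (hfpos _), Real.norm_of_nonneg (hfpos _), hstep,
    mul_comm ((1:ℝ)/2) (f n)]
  exact mul_le_mul_of_nonneg_left hq (hfpos n)

noncomputable def sonineA (μ : ℂ) (n : ℕ) : ℂ :=
  (-1) ^ n / ((n.factorial : ℂ) * Complex.Gamma ((n : ℂ) + μ + 1))

noncomputable def sonineF (μ ν : ℂ) (t : ℝ) (n : ℕ) (s : ℝ) : ℂ :=
  sonineA μ n * (((s * t : ℝ) : ℂ) / 2) ^ (2 * (n : ℂ) + μ) * (s : ℂ) ^ (μ + 1) *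
    (((1 - s ^ 2 : ℝ) : ℂ)) ^ ν

lemma sonineF_eq_gg (μ ν : ℂ) {t : ℝ} (ht : 0 < t) (n : ℕ) {s : ℝ}
    (hs : s ∈ Set.Ioo (0:ℝ) 1) :
    sonineF μ ν t n s
      = (sonineA μ n * (((t / 2 : ℝ)) : ℂ) ^ (2 * (n : ℂ) + μ)) *
        gg ((n : ℂ) + μ + 1) (ν + 1) s := by
  obtain ⟨hs0, hs1⟩ := hs
  have h1 : ((s * t : ℝ) : ℂ) / 2 = ((s * (t / 2) : ℝ) : ℂ) := by push_cast; ring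
  rw [sonineF, h1, show ((s * (t/2) : ℝ) : ℂ) = (s:ℂ) * ((t/2:ℝ):ℂ) by push_cast; ring,
    mul_cpow_ofReal_nonneg hs0.le (by positivity)]
  rw [gg]
  have hsne : (s:ℂ) ≠ 0 := by exact_mod_cast hs0.ne'
  conv_rhs => rw [show 2 * ((n:ℂ) + μ + 1) - 1 = (2 * (n:ℂ) + μ) + (μ + 1) by ring,
    cpow_add _ _ hsne, show ν + 1 - 1 = ν by ring]
  ring

lemma gg_norm {a b : ℂ} {s : ℝ} (hs : s ∈ Set.Ioo (0:ℝ) 1) :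
    ‖gg a b s‖ = s ^ (2 * a.re - 1) * (1 - s ^ 2) ^ (b.re - 1) := by
  obtain ⟨hs0, hs1⟩ := hs
  have h2 : (0:ℝ) < 1 - s ^ 2 := by nlinarith
  rw [gg, norm_mul,
    Complex.norm_cpow_eq_rpow_re_of_pos hs0, Complex.norm_cpow_eq_rpow_re_of_pos h2]
  norm_num

lemma sonineF_norm_le (μ ν : ℂ) {t : ℝ} (ht : 0 < t) (n : ℕ) {s : ℝ}
    (hs : s ∈ Set.Ioo (0:ℝ) 1) :
    ‖sonineF μ ν t n s‖ ≤
      (‖sonineA μ n‖ * (t / 2) ^ (2 * (n:ℝ) + μ.re)) *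
        ‖gg ((μ.re : ℂ) + 1) ((ν.re : ℂ) + 1) s‖ := by
  obtain ⟨hs0, hs1⟩ := hs
  have h2 : (0:ℝ) < 1 - s ^ 2 := by nlinarith
  have ht2 : (0:ℝ) < t / 2 := by positivity
  have h1 : ((s * t : ℝ) : ℂ) / 2 = ((s * (t / 2) : ℝ) : ℂ) := by push_cast; ring
  rw [sonineF, h1, norm_mul, norm_mul, norm_mul,
    Complex.norm_cpow_eq_rpow_re_of_pos (by positivity : (0:ℝ) < s * (t/2)),
    Complex.norm_cpow_eq_rpow_re_of_pos hs0, Complex.norm_cpow_eq_rpow_re_of_pos h2,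
    gg_norm ⟨hs0, hs1⟩]
  have hre : (2 * (n:ℂ) + μ).re = 2 * (n:ℝ) + μ.re := by simp
  have hre2 : ((μ:ℂ) + 1).re = μ.re + 1 := by simp
  rw [hre, hre2, Real.mul_rpow hs0.le ht2.le]
  simp only [Complex.add_re, Complex.ofReal_re, Complex.one_re]
  rw [show 2 * (μ.re + 1) - 1 = 2 * μ.re + 1 by ring, show ν.re + 1 - 1 = ν.re by ring]
  have key : s ^ (2 * (n:ℝ) + μ.re) * s ^ (μ.re + 1) ≤ s ^ (2 * μ.re + 1) := by
    rw [← Real.rpow_add hs0]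
    exact Real.rpow_le_rpow_of_exponent_ge hs0 hs1.le
      (by have : (0:ℝ) ≤ n := n.cast_nonneg; linarith)
  calc ‖sonineA μ n‖ * (s ^ (2*(n:ℝ)+μ.re) * (t/2) ^ (2*(n:ℝ)+μ.re)) *
        s ^ (μ.re+1) * (1 - s^2) ^ ν.re
      = (‖sonineA μ n‖ * (t/2) ^ (2*(n:ℝ)+μ.re)) *
        ((s ^ (2*(n:ℝ)+μ.re) * s ^ (μ.re+1)) * (1 - s^2) ^ ν.re) := by ring
    _ ≤ (‖sonineA μ n‖ * (t/2) ^ (2*(n:ℝ)+μ.re)) *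
        (s ^ (2*μ.re+1) * (1 - s^2) ^ ν.re) := by
        apply mul_le_mul_of_nonneg_left _ (by positivity)
        exact mul_le_mul_of_nonneg_right key (by positivity)



lemma beta_eq {a b : ℂ} (ha : 0 < a.re) (hb : 0 < b.re) :
    Complex.betaIntegral a b = Complex.Gamma a * Complex.Gamma b / Complex.Gamma (a + b) := by
  have h := Complex.Gamma_mul_Gamma_eq_betaIntegral ha hb
  have hab : Complex.Gamma (a + b) ≠ 0 :=
    Complex.Gamma_ne_zero_of_re_pos (by rw [Complex.add_re]; linarith)
  field_simp
  linear_combination -h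

lemma sonineA_abs (μ : ℂ) (n : ℕ) :
    ‖sonineA μ n‖
      = 1 / ((n.factorial : ℝ) * ‖Complex.Gamma ((n : ℂ) + μ + 1)‖) := by
  rw [sonineA, norm_div, norm_mul, norm_pow]
  simp [Complex.norm_natCast]

lemma sonine_term (μ ν : ℂ) (hμ : -1 < μ.re) (hν : -1 < ν.re) {t : ℝ} (ht : 0 < t) (n : ℕ) :
    ((t:ℂ) ^ (ν+1) / ((2:ℂ) ^ ν * Complex.Gamma (ν+1))) *
      ((sonineA μ n * (((t / 2 : ℝ)) : ℂ) ^ (2 * (n:ℂ) + μ)) *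
        ((1/2) * Complex.betaIntegral ((n:ℂ) + μ + 1) (ν + 1)))
    = ((-1) ^ n / ((n.factorial : ℂ) * Complex.Gamma ((n:ℂ) + (μ + ν + 1) + 1))) *
        (((t:ℂ) / 2) ^ (2 * (n:ℂ) + (μ + ν + 1))) := by
  have hn0 : (0:ℝ) ≤ (n:ℝ) := n.cast_nonneg
  have hμ1 : 0 < ((n:ℂ) + μ + 1).re := by
    simp only [Complex.add_re, Complex.natCast_re, Complex.one_re]; linarith
  have hν1 : 0 < ((ν:ℂ) + 1).re := by
    simp only [Complex.add_re, Complex.one_re]; linarith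
  have hG3 : Complex.Gamma (((n:ℂ) + μ + 1) + (ν + 1)) = Complex.Gamma ((n:ℂ) + (μ + ν + 1) + 1) := by
    congr 1; ring
  have htne : ((t:ℂ) / 2) ≠ 0 := by
    apply div_ne_zero _ two_ne_zero
    exact_mod_cast ht.ne'
  have hsplit : ((t:ℂ)/2) ^ (2 * (n:ℂ) + (μ + ν + 1))
      = ((t:ℂ)/2) ^ (2 * (n:ℂ) + μ) * ((t:ℂ)/2) ^ (ν + 1) := by
    rw [show 2 * (n:ℂ) + (μ + ν + 1) = (2 * (n:ℂ) + μ) + (ν + 1) by ring, cpow_add _ _ htne]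
  have harg : (2:ℂ).arg ≠ Real.pi := by
    rw [show (2:ℂ) = ((2:ℝ):ℂ) by norm_num, Complex.arg_ofReal_of_nonneg (by norm_num)]
    exact Ne.symm Real.pi_ne_zero
  have hD2 : ((t:ℂ)/2) ^ (ν + 1) = (t:ℂ) ^ (ν + 1) / (2:ℂ) ^ (ν + 1) := by
    rw [show ((t:ℂ)/2) = (t:ℂ) * (((2⁻¹:ℝ)):ℂ) by push_cast; ring,
      mul_cpow_ofReal_nonneg ht.le (by norm_num),
      show (((2⁻¹:ℝ)):ℂ) = (2:ℂ)⁻¹ by push_cast; norm_num,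
      Complex.inv_cpow _ _ harg, ← div_eq_mul_inv]
  have h2ν : (2:ℂ) ^ ((ν:ℂ) + 1) = (2:ℂ) ^ ν * 2 := by
    rw [Complex.cpow_add _ _ two_ne_zero, Complex.cpow_one]
  have hcast : (((t / 2 : ℝ)) : ℂ) = (t:ℂ) / 2 := by push_cast; ring
  have hGν : Complex.Gamma (ν + 1) ≠ 0 := Complex.Gamma_ne_zero_of_re_pos hν1
  have hGμ : Complex.Gamma ((n:ℂ) + μ + 1) ≠ 0 := Complex.Gamma_ne_zero_of_re_pos hμ1
  have hG3' : Complex.Gamma ((n:ℂ) + (μ + ν + 1) + 1) ≠ 0 := by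
    apply Complex.Gamma_ne_zero_of_re_pos
    simp only [Complex.add_re, Complex.natCast_re, Complex.one_re]
    linarith
  have h2νne : (2:ℂ) ^ (ν:ℂ) ≠ 0 := by
    rw [Complex.cpow_def_of_ne_zero two_ne_zero]
    exact Complex.exp_ne_zero _
  have hNne : ((n.factorial : ℂ)) ≠ 0 := by exact_mod_cast n.factorial_ne_zero
  rw [beta_eq hμ1 hν1, hG3, sonineA, hcast, hsplit, hD2, h2ν]
  field_simp

lemma tsum_sonineF (μ ν : ℂ) (t : ℝ) (s : ℝ) :
    ∑' n, sonineF μ ν t n s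
      = besselJ μ (s * t) * (s : ℂ) ^ (μ + 1) * (((1 - s ^ 2 : ℝ) : ℂ)) ^ ν := by
  simp only [sonineF, sonineA]
  rw [tsum_mul_right, tsum_mul_right, besselJ]

theorem sonine_first_finite_integral (μ ν : ℂ) (hμ : -1 < μ.re) (hν : -1 < ν.re)
    (t : ℝ) (ht : 0 < t) :
    besselJ (μ + ν + 1) t =
      ((t : ℂ) ^ (ν + 1) / ((2 : ℂ) ^ ν * Complex.Gamma (ν + 1))) *
        ∫ s in (0 : ℝ)..1,
          besselJ μ (s * t) * (s : ℂ) ^ (μ + 1) * (((1 - s ^ 2 : ℝ) : ℂ)) ^ ν := by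
  have ht2 : (0:ℝ) < t / 2 := by positivity
  have hν1 : 0 < ((ν:ℂ) + 1).re := by simp only [Complex.add_re, Complex.one_re]; linarith
  have haN : ∀ n : ℕ, 0 < ((n:ℂ) + μ + 1).re := fun n => by
    have : (0:ℝ) ≤ (n:ℝ) := n.cast_nonneg
    simp only [Complex.add_re, Complex.natCast_re, Complex.one_re]; linarith
  have hre0 : 0 < ((μ.re : ℂ) + 1).re := by
    simp only [Complex.add_re, Complex.ofReal_re, Complex.one_re]; linarith
  have hre0' : 0 < ((ν.re : ℂ) + 1).re := by
    simp only [Complex.add_re, Complex.ofReal_re, Complex.one_re]; linarith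
  set D : ℕ → ℂ := fun n => sonineA μ n * (((t / 2 : ℝ)) : ℂ) ^ (2 * (n:ℂ) + μ) with hD
  have hInt : ∀ n, MeasureTheory.IntegrableOn (sonineF μ ν t n) (Set.Ioo 0 1) := fun n => by
    have h : MeasureTheory.IntegrableOn (fun x => D n * gg ((n:ℂ) + μ + 1) (ν + 1) x)
        (Set.Ioo (0:ℝ) 1) := (gg_integrableOn (haN n) hν1).const_mul (D n)
    exact h.congr_fun (fun s hs => (sonineF_eq_gg μ ν ht n hs).symm) measurableSet_Ioo
  have hIval : ∀ n, (∫ s in Set.Ioo (0:ℝ) 1, sonineF μ ν t n s)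
      = D n * ((1/2) * Complex.betaIntegral ((n:ℂ) + μ + 1) (ν + 1)) := fun n => by
    rw [MeasureTheory.setIntegral_congr_fun measurableSet_Ioo
      (fun s hs => sonineF_eq_gg μ ν ht n hs), MeasureTheory.integral_const_mul, gg_integral]
  set B : ℝ := ∫ s in Set.Ioo (0:ℝ) 1, ‖gg ((μ.re : ℂ) + 1) ((ν.re : ℂ) + 1) s‖ with hB
  have hggInt : MeasureTheory.IntegrableOn
      (fun s => ‖gg ((μ.re : ℂ) + 1) ((ν.re : ℂ) + 1) s‖) (Set.Ioo (0:ℝ) 1) :=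
    (gg_integrableOn hre0 hre0').norm
  have hBnd : ∀ n, (∫ s in Set.Ioo (0:ℝ) 1, ‖sonineF μ ν t n s‖)
      ≤ (‖sonineA μ n‖ * (t/2) ^ (2 * (n:ℝ) + μ.re)) * B := fun n => by
    rw [hB, ← MeasureTheory.integral_const_mul]
    exact MeasureTheory.setIntegral_mono_on (hInt n).norm (hggInt.const_mul _)
      measurableSet_Ioo (fun s hs => sonineF_norm_le μ ν ht n hs)
  have hsum : Summable (fun n : ℕ =>
      (‖sonineA μ n‖ * (t/2) ^ (2 * (n:ℝ) + μ.re)) * B) := by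
    refine Summable.congr (((summable_aux μ hμ ((t/2)^2) (sq_nonneg _)).mul_left
      ((t/2) ^ (μ.re) * B))) (fun n => ?_)
    rw [sonineA_abs]
    rw [show (2 * (n:ℝ) + μ.re) = (2 * (n:ℝ)) + μ.re by ring, Real.rpow_add ht2,
      show (2 * (n:ℝ)) = ((2 * n : ℕ) : ℝ) by push_cast; ring, Real.rpow_natCast, pow_mul]
    ring
  have hSumNorm : Summable (fun n => ∫ s in Set.Ioo (0:ℝ) 1, ‖sonineF μ ν t n s‖) :=
    Summable.of_nonneg_of_le
      (fun n => MeasureTheory.integral_nonneg (fun s => norm_nonneg _)) hBnd hsum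
  have hHasSum := MeasureTheory.hasSum_integral_of_summable_integral_norm
    (μ := MeasureTheory.volume.restrict (Set.Ioo (0:ℝ) 1)) hInt hSumNorm
  have step : (∫ s in (0:ℝ)..1,
        besselJ μ (s * t) * (s : ℂ) ^ (μ + 1) * (((1 - s ^ 2 : ℝ) : ℂ)) ^ ν)
      = ∑' n, ∫ s in Set.Ioo (0:ℝ) 1, sonineF μ ν t n s := by
    rw [intervalIntegral.integral_of_le zero_le_one,
      MeasureTheory.integral_Ioc_eq_integral_Ioo, hHasSum.tsum_eq]
    exact MeasureTheory.setIntegral_congr_fun measurableSet_Ioo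
      (fun s _ => (tsum_sonineF μ ν t s).symm)
  rw [step]
  rw [tsum_congr hIval, ← tsum_mul_left, besselJ]
  exact tsum_congr (fun n => (sonine_term μ ν hμ hν ht n).symm)

end SonineAux
end

section
/- Let g ∈ L¹(ℝⁿ) be a function whose distribution function satisfies |{x : |g(x)| > t}| ≤ c/t^r for all t > 0, where 1 < r < ∞. Then the convolution operator f ↦ f * g is of weak type (1, r): there is a constant C such that for all f ∈ L¹(ℝⁿ) and all s > 0, |{x : |f*g(x)| > s}| ≤ C (‖f‖₁ / s)^r. -/
open MeasureTheory

theorem convolution_weak_type_one_r (n : ℕ) (r : ℝ) (hr : 1 < r) (c : ℝ) (hc : 0 < c)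
    (g : EuclideanSpace ℝ (Fin n) → ℝ) (hg : Measurable g) (hgint : Integrable g volume)
    (hweak : ∀ t : ℝ, 0 < t → volume {x | t < |g x|} ≤ ENNReal.ofReal (c / t ^ r)) :
    ∃ C > 0, ∀ f : EuclideanSpace ℝ (Fin n) → ℝ, Integrable f volume →
      ∀ s : ℝ, 0 < s →
        volume {x | s < |∫ y, f (x - y) * g y|} ≤
          ENNReal.ofReal (C * ((∫ y, |f y|) / s) ^ r) := by
  classical
  set q : ℝ := (2:ℝ) ^ (1 - r) with hqdef
  have hq0 : 0 < q := Real.rpow_pos_of_pos two_pos _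
  have hq1 : q < 1 := Real.rpow_lt_one_of_one_lt_of_neg one_lt_two (by linarith)
  have h1q : (0:ℝ) < 1 - q := by linarith
  have h2r : (0:ℝ) < (2:ℝ) ^ r := Real.rpow_pos_of_pos two_pos _
  have h2r1 : (0:ℝ) < (2:ℝ) ^ (r+1) := Real.rpow_pos_of_pos two_pos _
  refine ⟨2 ^ (r + 1) * c / (1 - q), by positivity, ?_⟩
  intro f₀ hf₀ s hs
  -- replace f₀ by a measurable representative f
  obtain ⟨f, hfm, hff⟩ : ∃ f : EuclideanSpace ℝ (Fin n) → ℝ, Measurable f ∧ f₀ =ᵐ[volume] f :=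
    ⟨hf₀.1.mk f₀, hf₀.1.stronglyMeasurable_mk.measurable, hf₀.1.ae_eq_mk⟩
  have hf : Integrable f volume := hf₀.congr hff
  have hIeq : (∫ y, |f₀ y|) = ∫ y, |f y| := integral_congr_ae (hff.fun_comp abs)
  have hseteq : {x : EuclideanSpace ℝ (Fin n) | s < |∫ y, f₀ (x - y) * g y|}
      = {x : EuclideanSpace ℝ (Fin n) | s < |∫ y, f (x - y) * g y|} := by
    ext x
    have h1 : (fun y => f₀ (x - y)) =ᵐ[volume] fun y => f (x - y) :=
      (Measure.measurePreserving_sub_left volume x).quasiMeasurePreserving.ae_eq_comp hff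
    simp only [Set.mem_setOf_eq, integral_congr_ae (h1.mul (Filter.EventuallyEq.refl _ g))]
    exact Iff.of_eq (congrArg (fun z => s < |z|) (integral_congr_ae (h1.mul (Filter.EventuallyEq.refl _ g))))
  rw [hIeq, hseteq]
  set I : ℝ := ∫ y, |f y| with hIdef
  rcases eq_or_lt_of_le (integral_nonneg (fun y => abs_nonneg (f y)) : (0:ℝ) ≤ I) with hI0 | hI
  · -- trivial case: f vanishes a.e.
    have hfz : f =ᵐ[volume] 0 := by
      have h := (integral_eq_zero_iff_of_nonneg (fun y => abs_nonneg (f y)) hf.abs).mp hI0.symm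
      filter_upwards [h] with y hy
      simpa [abs_eq_zero] using hy
    have hzero : ∀ x : EuclideanSpace ℝ (Fin n), (∫ y, f (x - y) * g y) = 0 := by
      intro x
      apply integral_eq_zero_of_ae
      have h1 : (fun y => f (x - y)) =ᵐ[volume] fun _ => (0:ℝ) :=
        (Measure.measurePreserving_sub_left volume x).quasiMeasurePreserving.ae_eq_comp hfz
      filter_upwards [h1] with y hy
      simp [hy]
    have hempty : {x : EuclideanSpace ℝ (Fin n) | s < |∫ y, f (x - y) * g y|} = ∅ := by
      ext x
      simp only [Set.mem_setOf_eq, hzero x, abs_zero, Set.mem_empty_iff_false, iff_false, not_lt]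
      exact hs.le
    rw [hempty, measure_empty]
    exact zero_le
  · -- main case
    set M : ℝ := s / (2 * I) with hMdef
    have hM : 0 < M := by positivity
    set g₂ : EuclideanSpace ℝ (Fin n) → ℝ := fun y => if M < |g y| then g y else 0 with hg₂def
    have hSet : MeasurableSet {y : EuclideanSpace ℝ (Fin n) | M < |g y|} :=
      measurableSet_lt measurable_const hg.abs
    have hg₂m : Measurable g₂ := Measurable.ite hSet hg measurable_const
    set F : EuclideanSpace ℝ (Fin n) → ENNReal := fun z => ENNReal.ofReal |f z| with hFdef
    have hFm : Measurable F := ENNReal.measurable_ofReal.comp hfm.abs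
    set L : ENNReal := ∫⁻ y, F y with hLdef
    have hLI : ENNReal.ofReal I = L :=
      ofReal_integral_eq_lintegral_ofReal hf.abs (Filter.Eventually.of_forall fun y => abs_nonneg _)
    have htrans : ∀ x : EuclideanSpace ℝ (Fin n), (∫⁻ y, F (x - y)) = L := fun x =>
      (Measure.measurePreserving_sub_left volume x).lintegral_comp hFm
    have htrans' : ∀ y : EuclideanSpace ℝ (Fin n), (∫⁻ x, F (x - y)) = L := fun y =>
      (measurePreserving_sub_right volume y).lintegral_comp hFm
    set H : EuclideanSpace ℝ (Fin n) → ENNReal :=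
      fun x => ∫⁻ y, F (x - y) * ENNReal.ofReal |g₂ y| with hHdef
    have hg₂e : Measurable fun y => ENNReal.ofReal |g₂ y| :=
      ENNReal.measurable_ofReal.comp hg₂m.abs
    have huncurry : Measurable (Function.uncurry
        fun x y : EuclideanSpace ℝ (Fin n) => F (x - y) * ENNReal.ofReal |g₂ y|) := by
      exact (hFm.comp (measurable_fst.sub measurable_snd)).mul (hg₂e.comp measurable_snd)
    have hHm : Measurable H := Measurable.lintegral_prod_right huncurry
    set G₁ : EuclideanSpace ℝ (Fin n) → ENNReal :=
      fun y => if M < |g y| then 0 else ENNReal.ofReal |g y| with hG₁def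
    have hG₁m : Measurable G₁ :=
      Measurable.ite hSet measurable_const (ENNReal.measurable_ofReal.comp hg.abs)
    -- key pointwise inclusion
    have hkey : {x : EuclideanSpace ℝ (Fin n) | s < |∫ y, f (x - y) * g y|}
        ⊆ {x : EuclideanSpace ℝ (Fin n) | ENNReal.ofReal (s/2) ≤ H x} := by
      intro x hx
      simp only [Set.mem_setOf_eq] at hx ⊢
      have h0 : ENNReal.ofReal s ≤ ∫⁻ y, F (x - y) * ENNReal.ofReal |g y| := by
        have h1 : ENNReal.ofReal s ≤ ∫⁻ y, ENNReal.ofReal ‖f (x - y) * g y‖ := by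
          have hn := norm_integral_le_lintegral_norm (μ := volume) (fun y => f (x - y) * g y)
          rw [Real.norm_eq_abs] at hn
          exact le_trans (le_trans (ENNReal.ofReal_le_ofReal hx.le)
            (ENNReal.ofReal_le_ofReal hn)) ENNReal.ofReal_toReal_le
        refine le_trans h1 (le_of_eq (lintegral_congr fun y => ?_))
        rw [Real.norm_eq_abs, abs_mul, ENNReal.ofReal_mul (abs_nonneg _)]
      have hsplitg : ∀ y, ENNReal.ofReal |g y| = G₁ y + ENNReal.ofReal |g₂ y| := by
        intro y
        by_cases h : M < |g y| <;> simp [hG₁def, hg₂def, h]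
      have hsum : (∫⁻ y, F (x - y) * ENNReal.ofReal |g y|)
          = (∫⁻ y, F (x - y) * G₁ y) + H x := by
        have hm1 : Measurable fun y => F (x - y) * G₁ y :=
          (hFm.comp (measurable_const.sub measurable_id)).mul hG₁m
        rw [show H x = ∫⁻ y, F (x - y) * ENNReal.ofReal |g₂ y| from rfl,
          ← lintegral_add_left hm1]
        exact lintegral_congr fun y => by rw [hsplitg y, mul_add]
      have hb : (∫⁻ y, F (x - y) * G₁ y) ≤ ENNReal.ofReal (s/2) := by
        have hbd : ∀ y, G₁ y ≤ ENNReal.ofReal M := by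
          intro y
          by_cases h : M < |g y|
          · simp [hG₁def, h]
          · simp only [hG₁def, h, if_false]
            exact ENNReal.ofReal_le_ofReal (not_lt.1 h)
        calc (∫⁻ y, F (x - y) * G₁ y) ≤ ∫⁻ y, F (x - y) * ENNReal.ofReal M :=
              lintegral_mono fun y => mul_le_mul_right (hbd y) _
          _ = L * ENNReal.ofReal M := by
              rw [lintegral_mul_const' _ _ ENNReal.ofReal_ne_top, htrans x]
          _ = ENNReal.ofReal (s/2) := by
              rw [← hLI, ← ENNReal.ofReal_mul hI.le]
              congr 1
              rw [hMdef]
              field_simp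
              ring
              exact mul_inv_cancel₀ hI.ne'
      have hadd : ENNReal.ofReal (s/2) + ENNReal.ofReal (s/2) ≤ ENNReal.ofReal (s/2) + H x := by
        calc ENNReal.ofReal (s/2) + ENNReal.ofReal (s/2) = ENNReal.ofReal s := by
              rw [← ENNReal.ofReal_add (by positivity) (by positivity)]
              norm_num
          _ ≤ (∫⁻ y, F (x - y) * G₁ y) + H x := by rw [← hsum]; exact h0
          _ ≤ ENNReal.ofReal (s/2) + H x := add_le_add_left hb (H x)
      exact (ENNReal.add_le_add_iff_left ENNReal.ofReal_ne_top).mp hadd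
    -- Markov
    have markov : volume {x : EuclideanSpace ℝ (Fin n) | ENNReal.ofReal (s/2) ≤ H x}
        ≤ (∫⁻ x, H x) / ENNReal.ofReal (s/2) := by
      rw [ENNReal.le_div_iff_mul_le
        (Or.inl (ENNReal.ofReal_pos.mpr (by positivity)).ne') (Or.inl ENNReal.ofReal_ne_top),
        mul_comm]
      exact mul_meas_ge_le_lintegral₀ hHm.aemeasurable _
    -- Tonelli
    set G2 : ENNReal := ∫⁻ y, ENNReal.ofReal |g₂ y| with hG2def
    have hTon : (∫⁻ x, H x) = ENNReal.ofReal I * G2 := by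
      rw [hHdef, lintegral_lintegral_swap huncurry.aemeasurable]
      have hinner : ∀ y : EuclideanSpace ℝ (Fin n),
          (∫⁻ x, F (x - y) * ENNReal.ofReal |g₂ y|) = ENNReal.ofReal |g₂ y| * ENNReal.ofReal I := by
        intro y
        rw [lintegral_mul_const' _ _ ENNReal.ofReal_ne_top, htrans' y, ← hLI, mul_comm]
      rw [lintegral_congr hinner, lintegral_mul_const' _ _ ENNReal.ofReal_ne_top, mul_comm]
    -- tail estimate for g₂
    have htail : G2 ≤ ENNReal.ofReal (2 * c * M ^ (1 - r) / (1 - q)) := by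
      set A : ℕ → Set (EuclideanSpace ℝ (Fin n)) :=
        fun k => {y | 2 ^ k * M < |g y| ∧ |g y| ≤ 2 ^ (k + 1) * M} with hAdef
      have hAm : ∀ k, MeasurableSet (A k) := fun k =>
        (measurableSet_lt measurable_const hg.abs).inter (measurableSet_le hg.abs measurable_const)
      have hcover : ∀ y, ENNReal.ofReal |g₂ y|
          ≤ (⋃ k, A k).indicator (fun y => ENNReal.ofReal |g y|) y := by
        intro y
        by_cases h : M < |g y|
        · have hex : ∃ m : ℕ, |g y| ≤ 2 ^ m * M := by
            obtain ⟨m, hm⟩ := pow_unbounded_of_one_lt (|g y| / M) (one_lt_two (α := ℝ))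
            exact ⟨m, ((div_lt_iff₀ hM).mp hm).le⟩
          have hy : y ∈ ⋃ k, A k := by
            set n₀ := Nat.find hex with hn₀
            have hn₀pos : 0 < n₀ := by
              rcases Nat.eq_zero_or_pos n₀ with h0 | h0
              · exfalso
                have hsp := Nat.find_spec hex
                rw [← hn₀, h0] at hsp
                simp only [pow_zero, one_mul] at hsp
                linarith
              · exact h0
            refine Set.mem_iUnion.2 ⟨n₀ - 1, ?_, ?_⟩
            · have hmin := Nat.find_min hex (m := n₀ - 1) (by omega)
              push_neg at hmin
              exact hmin
            · have hsp := Nat.find_spec hex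
              rw [← hn₀] at hsp
              have he : n₀ - 1 + 1 = n₀ := by omega
              rw [he]
              exact hsp
          rw [Set.indicator_of_mem hy]
          apply ENNReal.ofReal_le_ofReal
          simp [hg₂def, h]
        · have : g₂ y = 0 := by simp [hg₂def, h]
          simp [this]
      calc G2 ≤ ∫⁻ y, (⋃ k, A k).indicator (fun y => ENNReal.ofReal |g y|) y :=
            lintegral_mono hcover
        _ = ∫⁻ y in ⋃ k, A k, ENNReal.ofReal |g y| :=
            lintegral_indicator (MeasurableSet.iUnion hAm) _
        _ ≤ ∑' k, ∫⁻ y in A k, ENNReal.ofReal |g y| := lintegral_iUnion_le _ _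
        _ ≤ ∑' k : ℕ, ENNReal.ofReal (2 * c * M ^ (1 - r)) * ENNReal.ofReal q ^ k := by
            apply ENNReal.tsum_le_tsum
            intro k
            calc (∫⁻ y in A k, ENNReal.ofReal |g y|)
                ≤ ∫⁻ _ in A k, ENNReal.ofReal (2 ^ (k+1) * M) :=
                  setLIntegral_mono measurable_const fun y hy => ENNReal.ofReal_le_ofReal hy.2
              _ = ENNReal.ofReal (2 ^ (k+1) * M) * volume (A k) := setLIntegral_const _ _
              _ ≤ ENNReal.ofReal (2 ^ (k+1) * M) * ENNReal.ofReal (c / (2 ^ k * M) ^ r) := by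
                  gcongr
                  refine le_trans (measure_mono ?_) (hweak (2 ^ k * M) (by positivity))
                  exact fun y hy => hy.1
              _ = ENNReal.ofReal (2 * c * M ^ (1 - r)) * ENNReal.ofReal q ^ k := by
                  rw [← ENNReal.ofReal_pow hq0.le,
                    ← ENNReal.ofReal_mul (by positivity), ← ENNReal.ofReal_mul (by positivity)]
                  congr 1
                  have h1 : ((2:ℝ) ^ k * M) ^ r = 2 ^ ((k:ℝ) * r) * M ^ r := by
                    rw [Real.mul_rpow (by positivity) hM.le, ← Real.rpow_natCast 2 k,
                      ← Real.rpow_mul (by norm_num)]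
                  have h2 : q ^ k = (2:ℝ) ^ ((k:ℝ) - (k:ℝ) * r) := by
                    rw [hqdef, ← Real.rpow_natCast ((2:ℝ) ^ (1-r)) k,
                      ← Real.rpow_mul (by norm_num)]
                    congr 1
                    ring
                  have h3 : M ^ (1 - r) = M / M ^ r := by
                    rw [Real.rpow_sub hM, Real.rpow_one]
                  have h4 : (2:ℝ) ^ ((k:ℝ) - (k:ℝ)*r) = 2 ^ (k:ℝ) / 2 ^ ((k:ℝ)*r) :=
                    Real.rpow_sub two_pos _ _
                  have h5 : (2:ℝ) ^ (k:ℝ) = 2 ^ k := Real.rpow_natCast 2 k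
                  rw [h1, h2, h3, h4, h5, pow_succ]
                  have hMr : (0:ℝ) < M ^ r := Real.rpow_pos_of_pos hM r
                  have h2kr : (0:ℝ) < (2:ℝ) ^ ((k:ℝ)*r) := Real.rpow_pos_of_pos two_pos _
                  have h2k : (0:ℝ) < (2:ℝ) ^ k := by positivity
                  field_simp
        _ = ENNReal.ofReal (2 * c * M ^ (1 - r)) * (1 - ENNReal.ofReal q)⁻¹ := by
            rw [ENNReal.tsum_mul_left, ENNReal.tsum_geometric]
        _ = ENNReal.ofReal (2 * c * M ^ (1 - r) / (1 - q)) := by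
            rw [ENNReal.ofReal_div_of_pos h1q, div_eq_mul_inv]
            congr 2
            rw [← ENNReal.ofReal_one, ← ENNReal.ofReal_sub _ hq0.le]
    -- combine
    calc volume {x : EuclideanSpace ℝ (Fin n) | s < |∫ y, f (x - y) * g y|}
        ≤ volume {x : EuclideanSpace ℝ (Fin n) | ENNReal.ofReal (s/2) ≤ H x} :=
          measure_mono hkey
      _ ≤ (∫⁻ x, H x) / ENNReal.ofReal (s/2) := markov
      _ ≤ (ENNReal.ofReal I * ENNReal.ofReal (2 * c * M ^ (1 - r) / (1 - q)))
            / ENNReal.ofReal (s/2) := by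
          rw [hTon]
          gcongr
      _ = ENNReal.ofReal (I * (2 * c * M ^ (1 - r) / (1 - q)) / (s/2)) := by
          rw [← ENNReal.ofReal_mul hI.le,
            ← ENNReal.ofReal_div_of_pos (show (0:ℝ) < s/2 by positivity)]
      _ = ENNReal.ofReal (2 ^ (r+1) * c / (1 - q) * (I / s) ^ r) := by
          congr 1
          have hMr3 : M ^ (1 - r) = M / M ^ r := by rw [Real.rpow_sub hM, Real.rpow_one]
          have hIs : (I / s) ^ r = I ^ r / s ^ r := Real.div_rpow hI.le hs.le r
          have hM2 : M ^ r = s ^ r / (2 ^ r * I ^ r) := by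
            rw [hMdef, Real.div_rpow hs.le (by positivity), Real.mul_rpow (by norm_num) hI.le]
          have h2r2 : (2:ℝ) ^ (r+1) = 2 ^ r * 2 := by
            rw [Real.rpow_add two_pos, Real.rpow_one]
          rw [hMr3, hM2, hIs, h2r2, hMdef]
          have hsr : (0:ℝ) < s ^ r := Real.rpow_pos_of_pos hs r
          have hIr : (0:ℝ) < I ^ r := Real.rpow_pos_of_pos hI r
          field_simp
          ring
          exact mul_inv_cancel₀ hI.ne'
end
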